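/- Let A and B be m×n complex matrices and E = B − A. Define δ′₁ := (‖E‖_F² − min{‖B‖₂²‖AA†EB†‖_F², ‖A‖₂²‖A†EB†B‖_F²}) / max{‖A‖₂⁴, ‖B‖₂⁴} and δ′₂ := (‖E‖_F² − min{‖A‖₂²‖BB†EA†‖_F², ‖B‖₂²‖B†EA†A‖_F²}) / max{‖A‖₂⁴, ‖B‖₂⁴}. Then ‖B† − A†‖_F² ≥ max{δ′₁ + ‖B†EA†‖_F², δ′₂ + ‖A†EB†‖_F²}. -/
import Mathlib

open Matrix

/-- The square of the Frobenius norm of a complex matrix. -/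
noncomputable def frobSq {α β : Type*} [Fintype α] [Fintype β] (M : Matrix α β ℂ) : ℝ :=
  ∑ i, ∑ j, ‖M i j‖ ^ 2

/-- The spectral norm (ℓ²-operator norm) of a complex matrix. -/
noncomputable def spec {α β : Type*} [Fintype α] [Fintype β] [DecidableEq β]
    (M : Matrix α β ℂ) : ℝ :=
  ‖LinearMap.toContinuousLinearMap (Matrix.toEuclideanLin M)‖

/-- `X` is the Moore–Penrose inverse of `M` (the four Penrose equations). -/
def IsMoorePenrose {α β : Type*} [Fintype α] [Fintype β]
    (M : Matrix α β ℂ) (X : Matrix β α ℂ) : Prop :=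
  M * X * M = M ∧ X * M * X = X ∧ (M * X)ᴴ = M * X ∧ (X * M)ᴴ = X * M

section Helpers

variable {α β γ : Type*} [Fintype α] [Fintype β] [Fintype γ]

lemma frobSq_nonneg (M : Matrix α β ℂ) : 0 ≤ frobSq M :=
  Finset.sum_nonneg fun _ _ => Finset.sum_nonneg fun _ _ => sq_nonneg _

lemma frobSq_neg (M : Matrix α β ℂ) : frobSq (-M) = frobSq M := by
  simp [frobSq]

lemma frobSq_conjTranspose (M : Matrix α β ℂ) : frobSq Mᴴ = frobSq M := by
  rw [frobSq, Finset.sum_comm]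
  simp [frobSq, conjTranspose_apply]

private lemma conjmulre (z : ℂ) : ((starRingEnd ℂ) z * z).re = ‖z‖ ^ 2 := by
  rw [Complex.conj_mul', ← Complex.ofReal_pow, Complex.ofReal_re]

lemma frobSq_eq_re_trace (M : Matrix α β ℂ) : frobSq M = (Matrix.trace (Mᴴ * M)).re := by
  simp only [Matrix.trace, Matrix.diag, Matrix.mul_apply, conjTranspose_apply]
  rw [Complex.re_sum, frobSq, Finset.sum_comm]
  refine Finset.sum_congr rfl fun j _ => ?_
  rw [Complex.re_sum]
  exact Finset.sum_congr rfl fun i _ => (conjmulre _).symm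

lemma frobSq_add_of_trace_eq_zero (X Y : Matrix α β ℂ) (h : Matrix.trace (Xᴴ * Y) = 0) :
    frobSq (X + Y) = frobSq X + frobSq Y := by
  have h' : Matrix.trace (Yᴴ * X) = 0 := by
    have e : (Xᴴ * Y)ᴴ = Yᴴ * X := by simp [Matrix.conjTranspose_mul]
    rw [← e, Matrix.trace_conjTranspose, h, star_zero]
  simp only [frobSq_eq_re_trace, Matrix.conjTranspose_add, Matrix.add_mul, Matrix.mul_add,
    Matrix.trace_add, h, h', Complex.add_re, add_zero, Complex.zero_re]
  ring

lemma frobSq_split_left [DecidableEq α] (P : Matrix α α ℂ) (hP : Pᴴ = P) (hPP : P * P = P)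
    (X : Matrix α β ℂ) :
    frobSq X = frobSq (P * X) + frobSq ((1 - P) * X) := by
  have hz : Matrix.trace ((P * X)ᴴ * ((1 - P) * X)) = 0 := by
    have h0 : P * (1 - P) = 0 := by rw [Matrix.mul_sub, Matrix.mul_one, hPP, sub_self]
    rw [conjTranspose_mul, hP, Matrix.mul_assoc, ← Matrix.mul_assoc P, h0, Matrix.zero_mul,
      Matrix.mul_zero, Matrix.trace_zero]
  have hx : X = P * X + (1 - P) * X := by
    rw [← Matrix.add_mul, add_sub_cancel, Matrix.one_mul]
  conv_lhs => rw [hx]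
  exact frobSq_add_of_trace_eq_zero _ _ hz

lemma frobSq_split_right [DecidableEq β] (Q : Matrix β β ℂ) (hQ : Qᴴ = Q) (hQQ : Q * Q = Q)
    (X : Matrix α β ℂ) :
    frobSq X = frobSq (X * Q) + frobSq (X * (1 - Q)) := by
  have hz : Matrix.trace ((X * Q)ᴴ * (X * (1 - Q))) = 0 := by
    have h0 : (1 - Q) * Q = 0 := by rw [Matrix.sub_mul, Matrix.one_mul, hQQ, sub_self]
    rw [conjTranspose_mul, hQ, Matrix.mul_assoc, Matrix.trace_mul_comm,
      Matrix.mul_assoc, Matrix.mul_assoc X (1 - Q) Q, h0, Matrix.mul_zero, Matrix.mul_zero,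
      Matrix.trace_zero]
  have hx : X = X * Q + X * (1 - Q) := by
    rw [← Matrix.mul_add, add_sub_cancel, Matrix.mul_one]
  conv_lhs => rw [hx]
  exact frobSq_add_of_trace_eq_zero _ _ hz

end Helpers

section SpecHelpers

open scoped Matrix.Norms.L2Operator

variable {α β γ : Type*} [Fintype α] [Fintype β] [Fintype γ]

lemma spec_eq_l2 [DecidableEq β] (M : Matrix α β ℂ) : spec M = ‖M‖ := by
  rw [Matrix.l2_opNorm_def]; rfl

lemma spec_conjTranspose [DecidableEq α] [DecidableEq β] (M : Matrix α β ℂ) :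
    spec Mᴴ = spec M := by
  rw [spec_eq_l2, spec_eq_l2, Matrix.l2_opNorm_conjTranspose]

lemma spec_pos [DecidableEq β] (M : Matrix α β ℂ) (h : M ≠ 0) : 0 < spec M := by
  rw [spec_eq_l2]
  exact norm_pos_iff.mpr h

lemma frobSq_mul_le [DecidableEq β] (M : Matrix α β ℂ) (X : Matrix β γ ℂ) :
    frobSq (M * X) ≤ spec M ^ 2 * frobSq X := by
  have key : ∀ j : γ, ∑ i, ‖(M * X) i j‖ ^ 2 ≤ spec M ^ 2 * ∑ k, ‖X k j‖ ^ 2 := by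
    intro j
    set v : EuclideanSpace ℂ β := (WithLp.equiv 2 (β → ℂ)).symm (fun k => X k j) with hv
    have h1 : ∑ i, ‖(M * X) i j‖ ^ 2 = ‖(Matrix.toEuclideanLin M) v‖ ^ 2 := by
      rw [EuclideanSpace.norm_eq, Real.sq_sqrt (Finset.sum_nonneg fun _ _ => sq_nonneg _)]
      refine Finset.sum_congr rfl fun i _ => ?_
      congr 1
    have h2 : ‖v‖ ^ 2 = ∑ k, ‖X k j‖ ^ 2 := by
      rw [EuclideanSpace.norm_eq, Real.sq_sqrt (Finset.sum_nonneg fun _ _ => sq_nonneg _)]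
      rfl
    have h3 : ‖(Matrix.toEuclideanLin M) v‖ ≤ spec M * ‖v‖ := by
      have := (LinearMap.toContinuousLinearMap (Matrix.toEuclideanLin M)).le_opNorm v
      simpa [spec] using this
    calc ∑ i, ‖(M * X) i j‖ ^ 2 = ‖(Matrix.toEuclideanLin M) v‖ ^ 2 := h1
      _ ≤ (spec M * ‖v‖) ^ 2 := pow_le_pow_left₀ (norm_nonneg _) h3 2
      _ = spec M ^ 2 * ∑ k, ‖X k j‖ ^ 2 := by rw [mul_pow, h2]
  calc frobSq (M * X) = ∑ j, ∑ i, ‖(M * X) i j‖ ^ 2 := Finset.sum_comm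
    _ ≤ ∑ j : γ, spec M ^ 2 * ∑ k, ‖X k j‖ ^ 2 := Finset.sum_le_sum fun j _ => key j
    _ = spec M ^ 2 * frobSq X := by rw [← Finset.mul_sum, frobSq, Finset.sum_comm]

lemma frobSq_mul_le_right [DecidableEq β] [DecidableEq γ]
    (X : Matrix α β ℂ) (M : Matrix β γ ℂ) :
    frobSq (X * M) ≤ frobSq X * spec M ^ 2 := by
  calc frobSq (X * M) = frobSq ((X * M)ᴴ) := (frobSq_conjTranspose _).symm
    _ = frobSq (Mᴴ * Xᴴ) := by rw [conjTranspose_mul]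
    _ ≤ spec Mᴴ ^ 2 * frobSq Xᴴ := frobSq_mul_le _ _
    _ = frobSq X * spec M ^ 2 := by rw [spec_conjTranspose, frobSq_conjTranspose, mul_comm]

end SpecHelpers

section Key

variable {m n : ℕ}

lemma key (A B : Matrix (Fin m) (Fin n) ℂ)
    (Adag Bdag : Matrix (Fin n) (Fin m) ℂ)
    (hA : IsMoorePenrose A Adag) (hB : IsMoorePenrose B Bdag)
    (hA0 : A ≠ 0) (hB0 : B ≠ 0) :
    frobSq (Bdag - Adag) ≥
      (frobSq (B - A) - min (spec B ^ 2 * frobSq (A * Adag * (B - A) * Bdag))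
          (spec A ^ 2 * frobSq (Adag * (B - A) * Bdag * B)))
        / max (spec A ^ 4) (spec B ^ 4)
      + frobSq (Bdag * (B - A) * Adag) := by
  obtain ⟨hA1, hA2, hA3, hA4⟩ := hA
  obtain ⟨hB1, hB2, hB3, hB4⟩ := hB
  set T1 : Matrix (Fin n) (Fin m) ℂ := -(Bdag * (B - A) * Adag) with hT1def
  set T2 : Matrix (Fin n) (Fin m) ℂ := Bdag * (1 - A * Adag) with hT2def
  set T3 : Matrix (Fin n) (Fin m) ℂ := -((1 - Bdag * B) * Adag) with hT3def
  -- basic consequences of the Penrose equations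
  have F2 : (1 - A * Adag) * Adagᴴ = 0 := by
    have h : Adag * (A * Adag) = Adag := by rw [← Matrix.mul_assoc, hA2]
    have h2 : (A * Adag) * Adagᴴ = Adagᴴ := by
      rw [← hA3, ← conjTranspose_mul, h]
    rw [Matrix.sub_mul, Matrix.one_mul, h2, sub_self]
  have F3 : Bdagᴴ * (1 - Bdag * B) = 0 := by
    have h2 : Bdagᴴ * (Bdag * B) = Bdagᴴ := by
      rw [← hB4, ← conjTranspose_mul, hB2]
    rw [Matrix.mul_sub, Matrix.mul_one, h2, sub_self]
  have F3l : Bdagᴴ * ((1 - Bdag * B) * Adag) = 0 := by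
    rw [← Matrix.mul_assoc, F3, Matrix.zero_mul]
  -- decomposition
  have F1 : Bdag - Adag = T1 + T2 + T3 := by
    rw [hT1def, hT2def, hT3def]
    simp only [Matrix.mul_sub, Matrix.sub_mul, Matrix.mul_one, Matrix.one_mul,
      Matrix.mul_assoc, neg_sub]
    abel
  -- orthogonality
  have hT2Ad : T2 * Adagᴴ = 0 := by
    rw [hT2def, Matrix.mul_assoc, F2, Matrix.mul_zero]
  have o12 : Matrix.trace (T1ᴴ * T2) = 0 := by
    rw [hT1def, conjTranspose_neg, Matrix.neg_mul, Matrix.trace_neg, conjTranspose_mul,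
      Matrix.mul_assoc, Matrix.trace_mul_comm, Matrix.mul_assoc, hT2Ad, Matrix.mul_zero,
      Matrix.trace_zero, neg_zero]
  have o13 : Matrix.trace (T1ᴴ * T3) = 0 := by
    rw [hT1def, hT3def, conjTranspose_neg, Matrix.neg_mul, Matrix.mul_neg, neg_neg,
      conjTranspose_mul, conjTranspose_mul]
    simp only [Matrix.mul_assoc]
    rw [F3l]
    simp
  have o23 : Matrix.trace (T2ᴴ * T3) = 0 := by
    rw [hT2def, hT3def, Matrix.mul_neg, Matrix.trace_neg, conjTranspose_mul]
    simp only [Matrix.mul_assoc]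
    rw [F3l]
    simp
  have hdec : frobSq (Bdag - Adag) = frobSq T1 + frobSq T2 + frobSq T3 := by
    have h123 : Matrix.trace ((T1 + T2)ᴴ * T3) = 0 := by
      rw [conjTranspose_add, Matrix.add_mul, Matrix.trace_add, o13, o23, add_zero]
    rw [F1, frobSq_add_of_trace_eq_zero _ _ h123, frobSq_add_of_trace_eq_zero _ _ o12]
  -- identities for the lower bounds on T2, T3
  have hPh : (1 - A * Adag)ᴴ = 1 - A * Adag := by
    rw [conjTranspose_sub, conjTranspose_one, hA3]
  have hBdB : Bdagᴴ * (Bᴴ * B) = B := by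
    rw [← Matrix.mul_assoc, ← conjTranspose_mul, hB3, hB1]
  have idT2 : (B * T2)ᴴ * B = (1 - A * Adag) * B := by
    rw [hT2def, conjTranspose_mul, conjTranspose_mul, hPh, Matrix.mul_assoc, Matrix.mul_assoc,
      hBdB]
  have hQh : (1 - Bdag * B)ᴴ = 1 - Bdag * B := by
    rw [conjTranspose_sub, conjTranspose_one, hB4]
  have hAAd : Aᴴ * Adagᴴ = Adag * A := by
    rw [← conjTranspose_mul, hA4]
  have idT3 : A * (T3 * A)ᴴ = -(A * (1 - Bdag * B)) := by
    rw [hT3def, Matrix.neg_mul, conjTranspose_neg, Matrix.mul_neg, conjTranspose_mul,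
      conjTranspose_mul, hQh, ← Matrix.mul_assoc Aᴴ Adagᴴ, hAAd,
      ← Matrix.mul_assoc A (Adag * A), ← Matrix.mul_assoc A Adag A, hA1]
  -- splitting of E
  have z1 : (1 - A * Adag) * (B - A) = (1 - A * Adag) * B := by
    have : (1 - A * Adag) * A = 0 := by
      rw [Matrix.sub_mul, Matrix.one_mul, hA1, sub_self]
    rw [Matrix.mul_sub, this, sub_zero]
  have z2 : ((A * Adag) * (B - A)) * (1 - Bdag * B) = -(A * (1 - Bdag * B)) := by
    have hBz : B * (1 - Bdag * B) = 0 := by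
      rw [Matrix.mul_sub, Matrix.mul_one, ← Matrix.mul_assoc, hB1, sub_self]
    have e1 : (A * Adag) * (B - A) = (A * Adag) * B - A := by
      rw [Matrix.mul_sub, hA1]
    rw [e1, Matrix.sub_mul, Matrix.mul_assoc, hBz, Matrix.mul_zero, zero_sub]
  -- splits of E
  have hPP : (A * Adag) * (A * Adag) = A * Adag := by
    rw [← Matrix.mul_assoc, hA1]
  have hQQ : (Bdag * B) * (Bdag * B) = Bdag * B := by
    rw [← Matrix.mul_assoc, hB2]
  have hsplit1 := frobSq_split_left (A * Adag) hA3 hPP (B - A)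
  have hsplit2 := frobSq_split_right (Bdag * B) hB4 hQQ ((A * Adag) * (B - A))
  set S := frobSq (((A * Adag) * (B - A)) * (Bdag * B)) with hS
  have ha := spec_pos A hA0
  have hb := spec_pos B hB0
  have ha4 : (0:ℝ) < spec A ^ 4 := by positivity
  have hb4 : (0:ℝ) < spec B ^ 4 := by positivity
  have hK : (0:ℝ) < max (spec A ^ 4) (spec B ^ 4) := lt_max_of_lt_left ha4
  have bV : frobSq ((1 - A * Adag) * B) ≤ spec B ^ 4 * frobSq T2 := by
    have c1 : frobSq ((B * T2)ᴴ * B) ≤ frobSq ((B * T2)ᴴ) * spec B ^ 2 :=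
      frobSq_mul_le_right _ _
    have c2 : frobSq (B * T2) ≤ spec B ^ 2 * frobSq T2 := frobSq_mul_le _ _
    have hb2 : (0:ℝ) ≤ spec B ^ 2 := by positivity
    rw [idT2.symm]
    rw [frobSq_conjTranspose] at c1
    calc frobSq ((B * T2)ᴴ * B) ≤ frobSq (B * T2) * spec B ^ 2 := c1
      _ ≤ (spec B ^ 2 * frobSq T2) * spec B ^ 2 := mul_le_mul_of_nonneg_right c2 hb2
      _ = spec B ^ 4 * frobSq T2 := by ring
  have bU : frobSq (A * (1 - Bdag * B)) ≤ spec A ^ 4 * frobSq T3 := by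
    have c0 : frobSq (A * (1 - Bdag * B)) = frobSq (A * (T3 * A)ᴴ) := by
      rw [← frobSq_neg (A * (1 - Bdag * B)), idT3.symm]
    have c1 : frobSq (A * (T3 * A)ᴴ) ≤ spec A ^ 2 * frobSq ((T3 * A)ᴴ) := frobSq_mul_le _ _
    have c2 : frobSq (T3 * A) ≤ frobSq T3 * spec A ^ 2 := frobSq_mul_le_right _ _
    have ha2 : (0:ℝ) ≤ spec A ^ 2 := by positivity
    rw [frobSq_conjTranspose] at c1
    calc frobSq (A * (1 - Bdag * B)) = frobSq (A * (T3 * A)ᴴ) := c0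
      _ ≤ spec A ^ 2 * frobSq (T3 * A) := c1
      _ ≤ spec A ^ 2 * (frobSq T3 * spec A ^ 2) := mul_le_mul_of_nonneg_left c2 ha2
      _ = spec A ^ 4 * frobSq T3 := by ring
  have hE : frobSq (B - A) =
      S + frobSq (A * (1 - Bdag * B)) + frobSq ((1 - A * Adag) * B) := by
    rw [hsplit1, hsplit2, z1, z2, frobSq_neg]
  have m1 : S ≤ spec B ^ 2 * frobSq (A * Adag * (B - A) * Bdag) := by
    have e : ((A * Adag) * (B - A)) * (Bdag * B) = (A * Adag * (B - A) * Bdag) * B := by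
      rw [Matrix.mul_assoc (A * Adag * (B - A)) Bdag B]
    have := frobSq_mul_le_right (A * Adag * (B - A) * Bdag) B
    rw [hS, e]
    linarith [this, mul_comm (frobSq (A * Adag * (B - A) * Bdag)) (spec B ^ 2)]
  have m2 : S ≤ spec A ^ 2 * frobSq (Adag * (B - A) * Bdag * B) := by
    have e : ((A * Adag) * (B - A)) * (Bdag * B) = A * (Adag * (B - A) * Bdag * B) := by
      simp only [Matrix.mul_assoc]
    rw [hS, e]
    exact frobSq_mul_le _ _
  have hmin : S ≤ min (spec B ^ 2 * frobSq (A * Adag * (B - A) * Bdag))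
      (spec A ^ 2 * frobSq (Adag * (B - A) * Bdag * B)) := le_min m1 m2
  have main : (frobSq (B - A) - min (spec B ^ 2 * frobSq (A * Adag * (B - A) * Bdag))
      (spec A ^ 2 * frobSq (Adag * (B - A) * Bdag * B))) / max (spec A ^ 4) (spec B ^ 4)
      ≤ frobSq T2 + frobSq T3 := by
    set K := max (spec A ^ 4) (spec B ^ 4) with hKdef
    have h1 : frobSq (B - A) - min (spec B ^ 2 * frobSq (A * Adag * (B - A) * Bdag))
        (spec A ^ 2 * frobSq (Adag * (B - A) * Bdag * B))
        ≤ frobSq (A * (1 - Bdag * B)) + frobSq ((1 - A * Adag) * B) := by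
      rw [hE]; linarith [hmin]
    have h2 : (frobSq (A * (1 - Bdag * B)) + frobSq ((1 - A * Adag) * B)) / K
        = frobSq (A * (1 - Bdag * B)) / K + frobSq ((1 - A * Adag) * B) / K := add_div _ _ _
    have h3 : frobSq (A * (1 - Bdag * B)) / K ≤ frobSq (A * (1 - Bdag * B)) / spec A ^ 4 :=
      div_le_div_of_nonneg_left (frobSq_nonneg _) ha4 (le_max_left _ _)
    have h4 : frobSq ((1 - A * Adag) * B) / K ≤ frobSq ((1 - A * Adag) * B) / spec B ^ 4 :=
      div_le_div_of_nonneg_left (frobSq_nonneg _) hb4 (le_max_right _ _)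
    have h5 : frobSq (A * (1 - Bdag * B)) / spec A ^ 4 ≤ frobSq T3 := by
      rw [div_le_iff₀ ha4]; linarith [bU]
    have h6 : frobSq ((1 - A * Adag) * B) / spec B ^ 4 ≤ frobSq T2 := by
      rw [div_le_iff₀ hb4]; linarith [bV]
    have h7 : (frobSq (B - A) - min (spec B ^ 2 * frobSq (A * Adag * (B - A) * Bdag))
        (spec A ^ 2 * frobSq (Adag * (B - A) * Bdag * B))) / K
        ≤ (frobSq (A * (1 - Bdag * B)) + frobSq ((1 - A * Adag) * B)) / K := by
      apply div_le_div_of_nonneg_right h1 hK.le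
    linarith
  have hT1n : frobSq T1 = frobSq (Bdag * (B - A) * Adag) := by
    rw [hT1def, frobSq_neg]
  rw [ge_iff_le, hdec]
  linarith [main, hT1n.le, hT1n.ge]

end Key

theorem stmt10 {m n : ℕ}
    (A B : Matrix (Fin m) (Fin n) ℂ)
    (Adag Bdag : Matrix (Fin n) (Fin m) ℂ)
    (hA : IsMoorePenrose A Adag) (hB : IsMoorePenrose B Bdag)
    (E : Matrix (Fin m) (Fin n) ℂ) (hE : E = B - A)
    (hA0 : A ≠ 0) (hB0 : B ≠ 0)
    :
    frobSq (Bdag - Adag) ≥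
      max
        ((frobSq E - min (spec B ^ 2 * frobSq (A * Adag * E * Bdag))
              (spec A ^ 2 * frobSq (Adag * E * Bdag * B)))
            / max (spec A ^ 4) (spec B ^ 4)
          + frobSq (Bdag * E * Adag))
        ((frobSq E - min (spec A ^ 2 * frobSq (B * Bdag * E * Adag))
              (spec B ^ 2 * frobSq (Bdag * E * Adag * A)))
            / max (spec A ^ 4) (spec B ^ 4)
          + frobSq (Adag * E * Bdag)) := by
  subst hE
  have h1 := key A B Adag Bdag hA hB hA0 hB0
  have h2 := key B A Bdag Adag hB hA hB0 hA0
  refine max_le h1 ?_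
  have e0 : A - B = -(B - A) := (neg_sub B A).symm
  rw [e0] at h2
  simp only [Matrix.mul_neg, Matrix.neg_mul, frobSq_neg] at h2
  rw [max_comm (spec B ^ 4) (spec A ^ 4)] at h2
  have e1 : Adag - Bdag = -(Bdag - Adag) := (neg_sub Bdag Adag).symm
  rw [e1, frobSq_neg] at h2
  exact h2
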